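/- With the Melnikov functions M_f and M_b defined below (via the unique root u_b(r) of K(·;r) in (6/5, 4/3)), one has M_f(r) → 1/3 and M_b(r) → −1/3 as r → ∞. -/

import Mathlib

open Filter Topology MeasureTheory

noncomputable section

/-- The Nagumo front profile `φ(χ) = 1/(1 + exp(−χ/√2))`. -/
def phi (χ : ℝ) : ℝ := 1 / (1 + Real.exp (-χ / Real.sqrt 2))

/-- The cubic `K(u;r)`. -/
def Kc (u r : ℝ) : ℝ := 40*u^3 - (50*r + 169)*u^2 + (160*r + 224)*u - 120*r - 96

/-- `q_{f,+}(r) = 1 + √(r/(r + 1/10))`. -/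
def qfp (r : ℝ) : ℝ := 1 + Real.sqrt (r / (r + 1/10))

/-- `q_{f,−}(r) = 1 − √(r/(r + 1/10))`. -/
def qfm (r : ℝ) : ℝ := 1 - Real.sqrt (r / (r + 1/10))

/-- `q_{b,+}(r,u) = 1 + √((r + u − 2)/(r + 1/10))`. -/
def qbp (r u : ℝ) : ℝ := 1 + Real.sqrt ((r + u - 2) / (r + 1/10))

/-- `q_{b,−}(r,u) = 1 − √((r + u − 2)/(r + 1/10))`. -/
def qbm (r u : ℝ) : ℝ := 1 - Real.sqrt ((r + u - 2) / (r + 1/10))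

/-- The singular wave-speed parameter `μ_0(r,u)`. -/
def mu0 (r u : ℝ) : ℝ :=
  (2*(2*qbm r u - qbp r u) + u*(2*qfm r - qfp r)) /
    (qbp r u - 2*qbm r u + qfp r - 2*qfm r)

/-- The singular diffusion coefficient `D_0(r,u)`. -/
def D0 (r u : ℝ) : ℝ :=
  2*(2 - u)^2 / ((r + 1/10) * (2*qbm r u - qbp r u + 2*qfm r - qfp r)^2)

/-- Exponential rate along the front: `a_f = √2(1/2 − q_{f−}/q_{f+})`. -/
def af (r : ℝ) : ℝ := Real.sqrt 2 * (1/2 - qfm r / qfp r)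

/-- Exponential rate along the back: `a_b = √2(1/2 − q_{b−}/q_{b+})`. -/
def ab (r u : ℝ) : ℝ := Real.sqrt 2 * (1/2 - qbm r u / qbp r u)

/-- The basic Melnikov integral `∫ e^{−aχ} φ′(χ)² dχ`. -/
def Jsq (a : ℝ) : ℝ := ∫ χ : ℝ, Real.exp (-a * χ) * (deriv phi χ)^2

/-- The basic Melnikov integral `∫ e^{−aχ} φ′(χ) φ(χ)ⁿ dχ`. -/
def Jn (a : ℝ) (n : ℕ) : ℝ := ∫ χ : ℝ, Real.exp (-a * χ) * (deriv phi χ * (phi χ)^n)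

/-- The Melnikov quantity `M_f(r)` (for `∂_D Q_f`). -/
def Mf (r : ℝ) : ℝ :=
  (qfp r / 2) * Real.sqrt 2 * (qfp r - 2 * qfm r) * Jsq (af r)
    + (1 / (10 * (r + 1/10))) * Jn (af r) 1
    - 2 * qfp r * Jn (af r) 2
    + (qfp r)^2 * Jn (af r) 3

/-- The Melnikov quantity `M_b(r)` (for `∂_D Q_b`), with `u = u_b(r)`. -/
def Mb (r u : ℝ) : ℝ :=
  -(qbp r u / 2) * Real.sqrt 2 * (qbp r u - 2 * qbm r u) * Jsq (ab r u)
    + ((u - 21/10) / (r + 1/10)) * Jn (ab r u) 1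
    + 2 * qbp r u * Jn (ab r u) 2
    - (qbp r u)^2 * Jn (ab r u) 3

/-- The Melnikov quantity `M̂_f(r)` (for `∂_μ Q_f`), with `u = u_b(r)`. -/
def Mhf (r u : ℝ) : ℝ :=
  -(qfp r * D0 r u * Real.sqrt 2 * (qfp r - 2 * qfm r) / (2 * (mu0 r u + 2))) * Jsq (af r)

/-- The Melnikov quantity `M̂_b(r)` (for `∂_μ Q_b`), with `u = u_b(r)`. -/
def Mhb (r u : ℝ) : ℝ :=
  -(qbp r u * Real.sqrt 2 * (qbp r u - 2 * qbm r u) / (2 * (mu0 r u + u))) * Jsq (ab r u)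

/-- The Melnikov quantity `M̃_f(r)` (for `∂_u 𝒬_f`), with `u = u_b(r)`. -/
def Mtf (r u : ℝ) : ℝ :=
  -(qfp r) * Real.sqrt ((r + 1/10) / D0 r u) * Jsq (af r) + Jn (af r) 1

/-- The nondegeneracy quantity `M̂(r) = M_b/M̂_b − M_f/M̂_f`, with `u = u_b(r)`. -/
def Mhat (r u : ℝ) : ℝ := Mb r u / Mhb r u - Mf r / Mhf r u

lemma s2_pos : (0:ℝ) < Real.sqrt 2 := Real.sqrt_pos.mpr (by norm_num)
lemma s2_mul : Real.sqrt 2 * Real.sqrt 2 = 2 := Real.mul_self_sqrt (by norm_num)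
lemma s2_lt : Real.sqrt 2 < 3/2 := by nlinarith [s2_mul, s2_pos]
lemma s2_gt : (7/5:ℝ) < Real.sqrt 2 := by nlinarith [s2_mul, s2_pos]
lemma oE_pos (x : ℝ) : 0 < 1 + Real.exp x := by positivity

lemma hasDerivAt_E (χ : ℝ) :
    HasDerivAt (fun χ : ℝ => Real.exp (-χ / Real.sqrt 2))
      (-(Real.exp (-χ / Real.sqrt 2)) / Real.sqrt 2) χ := by
  have h1 : HasDerivAt (fun χ : ℝ => -χ / Real.sqrt 2) (-1 / Real.sqrt 2) χ := by
    simpa using ((hasDerivAt_id χ).neg.div_const (Real.sqrt 2))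
  have := (Real.hasDerivAt_exp (-χ / Real.sqrt 2)).comp χ h1
  refine this.congr_deriv ?_
  ring

lemma hasDerivAt_invpow (k : ℕ) (χ : ℝ) :
    HasDerivAt (fun χ : ℝ => ((1 + Real.exp (-χ / Real.sqrt 2))^(k+1))⁻¹)
      ((k+1) * Real.exp (-χ / Real.sqrt 2) /
        (Real.sqrt 2 * (1 + Real.exp (-χ / Real.sqrt 2))^(k+2))) χ := by
  have h2 : HasDerivAt (fun χ : ℝ => 1 + Real.exp (-χ / Real.sqrt 2))
      (-(Real.exp (-χ / Real.sqrt 2)) / Real.sqrt 2) χ := (hasDerivAt_E χ).const_add 1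
  have h3 := (h2.pow (k+1)).inv (pow_ne_zero _ (oE_pos _).ne')
  refine h3.congr_deriv ?_
  have h4 : (0:ℝ) < 1 + Real.exp (-χ / Real.sqrt 2) := oE_pos _
  have := s2_pos
  simp only [Nat.add_sub_cancel, Nat.cast_add, Nat.cast_one, Pi.pow_apply]
  field_simp
  ring

lemma cont_E : Continuous (fun χ : ℝ => Real.exp (-χ / Real.sqrt 2)) :=
  Real.continuous_exp.comp (continuous_id.neg.div_const _)

lemma cont_phi : Continuous phi :=
  continuous_const.div (continuous_const.add cont_E) (fun x => ne_of_gt (oE_pos _))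

lemma tendsto_E_top : Tendsto (fun χ : ℝ => Real.exp (-χ / Real.sqrt 2)) atTop (𝓝 0) :=
  Real.tendsto_exp_atBot.comp (tendsto_neg_atTop_atBot.atBot_div_const s2_pos)

lemma tendsto_E_bot : Tendsto (fun χ : ℝ => Real.exp (-χ / Real.sqrt 2)) atBot atTop :=
  Real.tendsto_exp_atTop.comp (tendsto_neg_atBot_atTop.atTop_div_const s2_pos)

lemma tendsto_W_top (k : ℕ) :
    Tendsto (fun χ : ℝ => ((1 + Real.exp (-χ / Real.sqrt 2))^k)⁻¹) atTop (𝓝 1) := by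
  have h : Tendsto (fun χ : ℝ => ((1 + Real.exp (-χ / Real.sqrt 2))^k)⁻¹) atTop
      (𝓝 (((1 + 0:ℝ)^k)⁻¹)) := (((tendsto_E_top.const_add 1).pow k).inv₀ (by norm_num))
  simpa using h

lemma tendsto_W_bot (k : ℕ) (hk : 0 < k) :
    Tendsto (fun χ : ℝ => ((1 + Real.exp (-χ / Real.sqrt 2))^k)⁻¹) atBot (𝓝 0) := by
  apply tendsto_inv_atTop_zero.comp
  exact (tendsto_pow_atTop hk.ne').comp (tendsto_atTop_add_const_left _ 1 tendsto_E_bot)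

lemma hasDerivAt_phi (χ : ℝ) :
    HasDerivAt phi
      (Real.exp (-χ / Real.sqrt 2) / (Real.sqrt 2 * (1 + Real.exp (-χ / Real.sqrt 2))^2)) χ := by
  have h2 : HasDerivAt (fun χ : ℝ => 1 + Real.exp (-χ / Real.sqrt 2))
      (-(Real.exp (-χ / Real.sqrt 2)) / Real.sqrt 2) χ := (hasDerivAt_E χ).const_add 1
  have h3 := h2.inv (ne_of_gt (oE_pos _))
  have : phi = fun χ : ℝ => (1 + Real.exp (-χ / Real.sqrt 2))⁻¹ := by
    funext x; simp [phi, one_div]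
  rw [this]
  refine h3.congr_deriv ?_
  have := s2_pos
  field_simp

lemma deriv_phi : deriv phi = fun χ =>
    Real.exp (-χ / Real.sqrt 2) / (Real.sqrt 2 * (1 + Real.exp (-χ / Real.sqrt 2))^2) := by
  funext χ; exact (hasDerivAt_phi χ).deriv

lemma div_s2 (x : ℝ) : x / Real.sqrt 2 = x * Real.sqrt 2 / 2 := by
  rw [div_eq_div_iff s2_pos.ne' (by norm_num : (2:ℝ) ≠ 0), mul_assoc, s2_mul]

lemma norm_fn_le (n : ℕ) (hn : 1 ≤ n) {a : ℝ} (ha : a ∈ Set.Icc (3/5:ℝ) (4/5)) (χ : ℝ) :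
    ‖Real.exp (-a*χ) * (deriv phi χ * phi χ ^ n)‖ ≤ Real.exp (-|χ|/2) := by
  obtain ⟨ha1, ha2⟩ := ha
  rw [deriv_phi]
  set E := Real.exp (-χ / Real.sqrt 2) with hEdef
  have hE : 0 < E := Real.exp_pos _
  have h1E : 0 < 1 + E := by positivity
  have hphi : phi χ = (1 + E)⁻¹ := by rw [phi, one_div]
  rw [hphi, Real.norm_eq_abs, abs_of_nonneg (by positivity)]
  have h9 : (1:ℝ) ≤ Real.sqrt 2 * (1+E)^2 := by nlinarith [s2_gt, hE]
  rcases le_or_gt 0 χ with hχ | hχ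
  · -- χ ≥ 0
    have hEle : E ≤ Real.exp (-|χ|/2) := by
      rw [hEdef, Real.exp_le_exp, abs_of_nonneg hχ, div_s2]
      nlinarith [s2_gt]
    calc Real.exp (-a*χ) * (E / (Real.sqrt 2 * (1+E)^2) * ((1+E)⁻¹)^n)
        ≤ 1 * (E * 1) := by
          apply mul_le_mul
          · rw [← Real.exp_zero, Real.exp_le_exp]; nlinarith
          · apply mul_le_mul
            · rw [div_le_iff₀ (by positivity)]
              nlinarith [mul_le_mul_of_nonneg_left h9 hE.le]
            · refine pow_le_one₀ (by positivity) ?_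
              rw [inv_le_one_iff₀]; right; linarith
            · positivity
            · exact hE.le
          · positivity
          · norm_num
      _ ≤ Real.exp (-|χ|/2) := by rw [one_mul, mul_one]; exact hEle
  · -- χ < 0
    have hE1 : 1 ≤ E := by
      rw [hEdef, ← Real.exp_zero, Real.exp_le_exp]
      exact div_nonneg (by linarith) s2_pos.le
    have key : E / (Real.sqrt 2 * (1+E)^2) * ((1+E)⁻¹)^n ≤ E⁻¹ * E⁻¹ := by
      apply mul_le_mul
      · have hden : 0 < Real.sqrt 2 * (1+E)^2 := by positivity
        rw [inv_eq_one_div, div_le_div_iff₀ hden hE]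
        nlinarith [s2_gt, hE]
      · calc ((1+E)⁻¹)^n ≤ ((1+E)⁻¹)^1 := by
              refine pow_le_pow_of_le_one (by positivity) ?_ hn
              rw [inv_le_one_iff₀]; right; linarith
          _ ≤ E⁻¹ := by rw [pow_one]; exact inv_anti₀ hE (by linarith)
      · positivity
      · positivity
    calc Real.exp (-a*χ) * (E / (Real.sqrt 2 * (1+E)^2) * ((1+E)⁻¹)^n)
        ≤ Real.exp (-a*χ) * (E⁻¹ * E⁻¹) :=
          mul_le_mul_of_nonneg_left key (Real.exp_pos _).le
      _ = Real.exp (-a*χ + (χ/Real.sqrt 2 + χ/Real.sqrt 2)) := by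
          rw [hEdef, ← Real.exp_neg, neg_div, neg_neg, ← Real.exp_add, ← Real.exp_add]
      _ ≤ Real.exp (-|χ|/2) := by
          rw [Real.exp_le_exp, abs_of_nonpos hχ.le, div_s2]
          nlinarith [s2_gt, s2_lt]

lemma norm_fsq_le {a : ℝ} (ha : a ∈ Set.Icc (3/5:ℝ) (4/5)) (χ : ℝ) :
    ‖Real.exp (-a*χ) * (deriv phi χ)^2‖ ≤ Real.exp (-|χ|/2) := by
  obtain ⟨ha1, ha2⟩ := ha
  rw [deriv_phi]
  set E := Real.exp (-χ / Real.sqrt 2) with hEdef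
  have hE : 0 < E := Real.exp_pos _
  have h1E : 0 < 1 + E := by positivity
  rw [Real.norm_eq_abs, abs_of_nonneg (by positivity)]
  have h9 : (1:ℝ) ≤ Real.sqrt 2 * (1+E)^2 := by nlinarith [s2_gt, hE]
  rcases le_or_gt 0 χ with hχ | hχ
  · have hEle : E * E ≤ Real.exp (-|χ|/2) := by
      have h : E * E = Real.exp (-χ/Real.sqrt 2 + -χ/Real.sqrt 2) := by
        rw [Real.exp_add]
      rw [h, Real.exp_le_exp, abs_of_nonneg hχ, div_s2]
      nlinarith [s2_gt]
    calc Real.exp (-a*χ) * (E / (Real.sqrt 2 * (1+E)^2))^2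
        ≤ 1 * (E * E) := by
          apply mul_le_mul
          · rw [← Real.exp_zero, Real.exp_le_exp]; nlinarith
          · have h : E / (Real.sqrt 2 * (1+E)^2) ≤ E := by
              rw [div_le_iff₀ (by positivity)]
              nlinarith [mul_le_mul_of_nonneg_left h9 hE.le]
            calc (E / (Real.sqrt 2 * (1+E)^2))^2 ≤ E^2 :=
                  pow_le_pow_left₀ (by positivity) h 2
              _ = E * E := sq E
          · positivity
          · norm_num
      _ ≤ Real.exp (-|χ|/2) := by rw [one_mul]; exact hEle
  · have hE1 : 1 ≤ E := by
      rw [hEdef, ← Real.exp_zero, Real.exp_le_exp]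
      exact div_nonneg (by linarith) s2_pos.le
    have key : (E / (Real.sqrt 2 * (1+E)^2))^2 ≤ E⁻¹ * E⁻¹ := by
      have h : E / (Real.sqrt 2 * (1+E)^2) ≤ E⁻¹ := by
        have hden : 0 < Real.sqrt 2 * (1+E)^2 := by positivity
        rw [inv_eq_one_div, div_le_div_iff₀ hden hE]
        nlinarith [s2_gt, hE]
      calc (E / (Real.sqrt 2 * (1+E)^2))^2 ≤ (E⁻¹)^2 :=
            pow_le_pow_left₀ (by positivity) h 2
        _ = E⁻¹ * E⁻¹ := sq E⁻¹
    calc Real.exp (-a*χ) * (E / (Real.sqrt 2 * (1+E)^2))^2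
        ≤ Real.exp (-a*χ) * (E⁻¹ * E⁻¹) :=
          mul_le_mul_of_nonneg_left key (Real.exp_pos _).le
      _ = Real.exp (-a*χ + (χ/Real.sqrt 2 + χ/Real.sqrt 2)) := by
          rw [hEdef, ← Real.exp_neg, neg_div, neg_neg, ← Real.exp_add, ← Real.exp_add]
      _ ≤ Real.exp (-|χ|/2) := by
          rw [Real.exp_le_exp, abs_of_nonpos hχ.le, div_s2]
          nlinarith [s2_gt, s2_lt]

lemma bnd_integrable : Integrable (fun χ : ℝ => Real.exp (-|χ|/2)) := by
  have hIoi : IntegrableOn (fun χ : ℝ => Real.exp (-|χ|/2)) (Set.Ioi 0) := by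
    apply (exp_neg_integrableOn_Ioi 0 (by norm_num : (0:ℝ) < 1/2)).congr_fun ?_ measurableSet_Ioi
    intro x hx
    simp only
    rw [abs_of_pos hx]
    ring_nf
  have hIic : IntegrableOn (fun χ : ℝ => Real.exp (-|χ|/2)) (Set.Iic 0) := by
    rw [← Measure.map_neg_eq_self (volume : Measure ℝ)]
    have m : MeasurableEmbedding fun x : ℝ => -x := (Homeomorph.neg ℝ).measurableEmbedding
    rw [m.integrableOn_map_iff]
    simp_rw [Function.comp_def, abs_neg, Set.neg_preimage, Set.neg_Iic, neg_zero]
    exact Iff.mpr integrableOn_Ici_iff_integrableOn_Ioi hIoi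
  have := hIic.union hIoi
  rwa [Set.Iic_union_Ioi, integrableOn_univ] at this

lemma exp_half (χ : ℝ) : Real.exp (-(Real.sqrt 2/2) * χ) = Real.exp (-χ/Real.sqrt 2) := by
  rw [div_s2]; ring_nf

lemma cont_dphi : Continuous (fun χ : ℝ =>
    Real.exp (-χ / Real.sqrt 2) / (Real.sqrt 2 * (1 + Real.exp (-χ / Real.sqrt 2))^2)) :=
  cont_E.div (continuous_const.mul ((continuous_const.add cont_E).pow 2))
    (fun x => by positivity)

lemma cont_exp_a (a : ℝ) : Continuous (fun χ : ℝ => Real.exp (-a * χ)) := by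
  have h : Continuous fun χ : ℝ => -a * χ := continuous_const.mul continuous_id
  exact Real.continuous_exp.comp h

lemma cont_fn (a : ℝ) (n : ℕ) :
    Continuous (fun χ : ℝ => Real.exp (-a * χ) * (deriv phi χ * (phi χ)^n)) := by
  simp only [deriv_phi]
  exact (cont_exp_a a).mul (cont_dphi.mul (cont_phi.pow n))

lemma cont_fsq (a : ℝ) :
    Continuous (fun χ : ℝ => Real.exp (-a * χ) * (deriv phi χ)^2) := by
  simp only [deriv_phi]
  exact (cont_exp_a a).mul (cont_dphi.pow 2)

lemma integrable_fn (n : ℕ) (hn : 1 ≤ n) {a : ℝ} (ha : a ∈ Set.Icc (3/5:ℝ) (4/5)) :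
    Integrable (fun χ : ℝ => Real.exp (-a * χ) * (deriv phi χ * (phi χ)^n)) :=
  bnd_integrable.mono' (cont_fn a n).aestronglyMeasurable
    (Eventually.of_forall (norm_fn_le n hn ha))

lemma integrable_fsq {a : ℝ} (ha : a ∈ Set.Icc (3/5:ℝ) (4/5)) :
    Integrable (fun χ : ℝ => Real.exp (-a * χ) * (deriv phi χ)^2) :=
  bnd_integrable.mono' (cont_fsq a).aestronglyMeasurable
    (Eventually.of_forall (norm_fsq_le ha))

lemma s2h_mem : Real.sqrt 2/2 ∈ Set.Ioo (3/5:ℝ) (4/5) := by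
  constructor
  · nlinarith [s2_gt]
  · nlinarith [s2_lt]

lemma integral_eq_of_hasDerivAt {f F : ℝ → ℝ} {L : ℝ}
    (hF : ∀ x, HasDerivAt F (f x) x) (hf : Integrable f)
    (h0 : Tendsto F atBot (𝓝 0)) (hL : Tendsto F atTop (𝓝 L)) :
    ∫ x, f x = L := by
  have h1 := integral_Iic_of_hasDerivAt_of_tendsto' (a := 0) (fun x _ => hF x)
    hf.integrableOn h0
  have h2 := integral_Ioi_of_hasDerivAt_of_tendsto' (a := 0) (fun x _ => hF x)
    hf.integrableOn hL
  rw [← intervalIntegral.integral_Iic_add_Ioi (b := 0) hf.integrableOn hf.integrableOn, h1, h2]; ring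

lemma mem_interval : Real.sqrt 2/2 ∈ Set.Icc (3/5:ℝ) (4/5) :=
  Set.Ioo_subset_Icc_self s2h_mem

lemma Jn1_val : Jn (Real.sqrt 2/2) 1 = 1/2 := by
  have hF : ∀ χ : ℝ, HasDerivAt
      (fun χ : ℝ => (1 + Real.exp (-χ / Real.sqrt 2))⁻¹
        - (1/2) * ((1 + Real.exp (-χ / Real.sqrt 2))^2)⁻¹)
      (Real.exp (-(Real.sqrt 2/2) * χ) * (deriv phi χ * (phi χ)^1)) χ := by
    intro χ
    have h1 : HasDerivAt (fun χ : ℝ => (1 + Real.exp (-χ / Real.sqrt 2))⁻¹)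
        (1 * Real.exp (-χ / Real.sqrt 2) /
          (Real.sqrt 2 * (1 + Real.exp (-χ / Real.sqrt 2))^2)) χ := by
      simpa using hasDerivAt_invpow 0 χ
    have h2 : HasDerivAt (fun χ : ℝ => ((1 + Real.exp (-χ / Real.sqrt 2))^2)⁻¹)
        (2 * Real.exp (-χ / Real.sqrt 2) /
          (Real.sqrt 2 * (1 + Real.exp (-χ / Real.sqrt 2))^3)) χ := by
      have := hasDerivAt_invpow 1 χ
      norm_num at this
      exact this
    have h := h1.sub (h2.const_mul (1/2 : ℝ))
    refine h.congr_deriv ?_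
    rw [deriv_phi, exp_half]
    simp only [phi, pow_one, one_div]
    have hE : (0:ℝ) < Real.exp (-χ / Real.sqrt 2) := Real.exp_pos _
    have h1E : (0:ℝ) < 1 + Real.exp (-χ / Real.sqrt 2) := by positivity
    have hs := s2_pos
    field_simp
    ring
  have hInt := integrable_fn 1 le_rfl mem_interval
  have h0 : Tendsto (fun χ : ℝ => (1 + Real.exp (-χ / Real.sqrt 2))⁻¹
        - (1/2) * ((1 + Real.exp (-χ / Real.sqrt 2))^2)⁻¹) atBot (𝓝 0) := by
    have := (tendsto_W_bot 1 one_pos).sub ((tendsto_W_bot 2 two_pos).const_mul (1/2 : ℝ))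
    simpa using this
  have hL : Tendsto (fun χ : ℝ => (1 + Real.exp (-χ / Real.sqrt 2))⁻¹
        - (1/2) * ((1 + Real.exp (-χ / Real.sqrt 2))^2)⁻¹) atTop (𝓝 (1/2)) := by
    have := (tendsto_W_top 1).sub ((tendsto_W_top 2).const_mul (1/2 : ℝ))
    norm_num at this
    exact this
  exact integral_eq_of_hasDerivAt hF hInt h0 hL

lemma hip (k : ℕ) (χ : ℝ) (m m1 m2 : ℕ) (hm : m = k + 1) (h1 : m1 = k + 1) (h2 : m2 = k + 2) :
    HasDerivAt (fun χ : ℝ => ((1 + Real.exp (-χ / Real.sqrt 2))^m)⁻¹)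
      ((m1 : ℝ) * Real.exp (-χ / Real.sqrt 2) /
        (Real.sqrt 2 * (1 + Real.exp (-χ / Real.sqrt 2))^m2)) χ := by
  subst hm h1 h2
  exact_mod_cast hasDerivAt_invpow k χ

lemma Jn2_val : Jn (Real.sqrt 2/2) 2 = 1/6 := by
  have hF : ∀ χ : ℝ, HasDerivAt
      (fun χ : ℝ => (1/2) * ((1 + Real.exp (-χ / Real.sqrt 2))^2)⁻¹
        - (1/3) * ((1 + Real.exp (-χ / Real.sqrt 2))^3)⁻¹)
      (Real.exp (-(Real.sqrt 2/2) * χ) * (deriv phi χ * (phi χ)^2)) χ := by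
    intro χ
    have h1 := (hip 1 χ 2 2 3 rfl rfl rfl).const_mul (1/2 : ℝ)
    have h2 := (hip 2 χ 3 3 4 rfl rfl rfl).const_mul (1/3 : ℝ)
    have h := h1.sub h2
    refine h.congr_deriv ?_
    rw [deriv_phi, exp_half]
    simp only [phi, one_div]
    have hE : (0:ℝ) < Real.exp (-χ / Real.sqrt 2) := Real.exp_pos _
    have h1E : (0:ℝ) < 1 + Real.exp (-χ / Real.sqrt 2) := by positivity
    have hs := s2_pos
    field_simp
    ring
  have hInt := integrable_fn 2 (by norm_num) mem_interval
  have h0 : Tendsto (fun χ : ℝ => (1/2) * ((1 + Real.exp (-χ / Real.sqrt 2))^2)⁻¹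
        - (1/3) * ((1 + Real.exp (-χ / Real.sqrt 2))^3)⁻¹) atBot (𝓝 0) := by
    have := ((tendsto_W_bot 2 two_pos).const_mul (1/2 : ℝ)).sub
      ((tendsto_W_bot 3 (by norm_num)).const_mul (1/3 : ℝ))
    simpa using this
  have hL : Tendsto (fun χ : ℝ => (1/2) * ((1 + Real.exp (-χ / Real.sqrt 2))^2)⁻¹
        - (1/3) * ((1 + Real.exp (-χ / Real.sqrt 2))^3)⁻¹) atTop (𝓝 (1/6)) := by
    have := ((tendsto_W_top 2).const_mul (1/2 : ℝ)).sub
      ((tendsto_W_top 3).const_mul (1/3 : ℝ))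
    norm_num at this
    exact this
  exact integral_eq_of_hasDerivAt hF hInt h0 hL

lemma Jn3_val : Jn (Real.sqrt 2/2) 3 = 1/12 := by
  have hF : ∀ χ : ℝ, HasDerivAt
      (fun χ : ℝ => (1/3) * ((1 + Real.exp (-χ / Real.sqrt 2))^3)⁻¹
        - (1/4) * ((1 + Real.exp (-χ / Real.sqrt 2))^4)⁻¹)
      (Real.exp (-(Real.sqrt 2/2) * χ) * (deriv phi χ * (phi χ)^3)) χ := by
    intro χ
    have h1 := (hip 2 χ 3 3 4 rfl rfl rfl).const_mul (1/3 : ℝ)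
    have h2 := (hip 3 χ 4 4 5 rfl rfl rfl).const_mul (1/4 : ℝ)
    have h := h1.sub h2
    refine h.congr_deriv ?_
    rw [deriv_phi, exp_half]
    simp only [phi, one_div]
    have hE : (0:ℝ) < Real.exp (-χ / Real.sqrt 2) := Real.exp_pos _
    have h1E : (0:ℝ) < 1 + Real.exp (-χ / Real.sqrt 2) := by positivity
    have hs := s2_pos
    field_simp
    ring
  have hInt := integrable_fn 3 (by norm_num) mem_interval
  have h0 : Tendsto (fun χ : ℝ => (1/3) * ((1 + Real.exp (-χ / Real.sqrt 2))^3)⁻¹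
        - (1/4) * ((1 + Real.exp (-χ / Real.sqrt 2))^4)⁻¹) atBot (𝓝 0) := by
    have := ((tendsto_W_bot 3 (by norm_num)).const_mul (1/3 : ℝ)).sub
      ((tendsto_W_bot 4 (by norm_num)).const_mul (1/4 : ℝ))
    simpa using this
  have hL : Tendsto (fun χ : ℝ => (1/3) * ((1 + Real.exp (-χ / Real.sqrt 2))^3)⁻¹
        - (1/4) * ((1 + Real.exp (-χ / Real.sqrt 2))^4)⁻¹) atTop (𝓝 (1/12)) := by
    have := ((tendsto_W_top 3).const_mul (1/3 : ℝ)).sub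
      ((tendsto_W_top 4).const_mul (1/4 : ℝ))
    norm_num at this
    exact this
  exact integral_eq_of_hasDerivAt hF hInt h0 hL

lemma Jsq_val : Jsq (Real.sqrt 2/2) = Real.sqrt 2/6 := by
  have hF : ∀ χ : ℝ, HasDerivAt
      (fun χ : ℝ => (Real.sqrt 2)⁻¹ * ((1 + Real.exp (-χ / Real.sqrt 2))⁻¹
        - ((1 + Real.exp (-χ / Real.sqrt 2))^2)⁻¹
        + (1/3) * ((1 + Real.exp (-χ / Real.sqrt 2))^3)⁻¹))
      (Real.exp (-(Real.sqrt 2/2) * χ) * (deriv phi χ)^2) χ := by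
    intro χ
    have h1 : HasDerivAt (fun χ : ℝ => (1 + Real.exp (-χ / Real.sqrt 2))⁻¹)
        (1 * Real.exp (-χ / Real.sqrt 2) /
          (Real.sqrt 2 * (1 + Real.exp (-χ / Real.sqrt 2))^2)) χ := by
      simpa using hasDerivAt_invpow 0 χ
    have h2 := hip 1 χ 2 2 3 rfl rfl rfl
    have h3 := (hip 2 χ 3 3 4 rfl rfl rfl).const_mul (1/3 : ℝ)
    have h := ((h1.sub h2).add h3).const_mul (Real.sqrt 2)⁻¹
    refine h.congr_deriv ?_
    rw [deriv_phi, exp_half]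
    have hE : (0:ℝ) < Real.exp (-χ / Real.sqrt 2) := Real.exp_pos _
    have h1E : (0:ℝ) < 1 + Real.exp (-χ / Real.sqrt 2) := by positivity
    have hs := s2_pos
    have hm := s2_mul
    field_simp
    ring_nf
  have hInt := integrable_fsq mem_interval
  have h0 : Tendsto (fun χ : ℝ => (Real.sqrt 2)⁻¹ * ((1 + Real.exp (-χ / Real.sqrt 2))⁻¹
        - ((1 + Real.exp (-χ / Real.sqrt 2))^2)⁻¹
        + (1/3) * ((1 + Real.exp (-χ / Real.sqrt 2))^3)⁻¹)) atBot (𝓝 0) := by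
    have h1 := tendsto_W_bot 1 one_pos
    simp only [pow_one] at h1
    have := (((h1.sub (tendsto_W_bot 2 two_pos)).add
      ((tendsto_W_bot 3 (by norm_num)).const_mul (1/3 : ℝ)))).const_mul (Real.sqrt 2)⁻¹
    simpa using this
  have hL : Tendsto (fun χ : ℝ => (Real.sqrt 2)⁻¹ * ((1 + Real.exp (-χ / Real.sqrt 2))⁻¹
        - ((1 + Real.exp (-χ / Real.sqrt 2))^2)⁻¹
        + (1/3) * ((1 + Real.exp (-χ / Real.sqrt 2))^3)⁻¹)) atTop (𝓝 (Real.sqrt 2/6)) := by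
    have h1 := tendsto_W_top 1
    simp only [pow_one] at h1
    have h := (((h1.sub (tendsto_W_top 2)).add
      ((tendsto_W_top 3).const_mul (1/3 : ℝ)))).const_mul (Real.sqrt 2)⁻¹
    have hv : (Real.sqrt 2)⁻¹ * (1 - 1 + 1/3 * 1) = Real.sqrt 2/6 := by
      rw [inv_eq_one_div, div_s2]
      ring
    rw [hv] at h
    exact h
  exact integral_eq_of_hasDerivAt hF hInt h0 hL

lemma contAt_Jn (n : ℕ) (hn : 1 ≤ n) : ContinuousAt (fun a => Jn a n) (Real.sqrt 2/2) := by
  unfold Jn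
  apply continuousAt_of_dominated (bound := fun χ => Real.exp (-|χ|/2))
  · exact Eventually.of_forall fun a => (cont_fn a n).aestronglyMeasurable
  · filter_upwards [Ioo_mem_nhds s2h_mem.1 s2h_mem.2] with a ha
    exact Eventually.of_forall fun χ => norm_fn_le n hn (Set.Ioo_subset_Icc_self ha) χ
  · exact bnd_integrable
  · refine Eventually.of_forall fun χ => ?_
    have h : Continuous fun a : ℝ => Real.exp (-a * χ) * (deriv phi χ * (phi χ)^n) := by
      have h1 : Continuous fun a : ℝ => -a * χ := (continuous_id.neg).mul continuous_const
      exact (Real.continuous_exp.comp h1).mul continuous_const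
    exact h.continuousAt

lemma contAt_Jsq : ContinuousAt Jsq (Real.sqrt 2/2) := by
  unfold Jsq
  apply continuousAt_of_dominated (bound := fun χ => Real.exp (-|χ|/2))
  · exact Eventually.of_forall fun a => (cont_fsq a).aestronglyMeasurable
  · filter_upwards [Ioo_mem_nhds s2h_mem.1 s2h_mem.2] with a ha
    exact Eventually.of_forall fun χ => norm_fsq_le (Set.Ioo_subset_Icc_self ha) χ
  · exact bnd_integrable
  · refine Eventually.of_forall fun χ => ?_
    have h : Continuous fun a : ℝ => Real.exp (-a * χ) * (deriv phi χ)^2 := by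
      have h1 : Continuous fun a : ℝ => -a * χ := (continuous_id.neg).mul continuous_const
      exact (Real.continuous_exp.comp h1).mul continuous_const
    exact h.continuousAt

lemma tendsto_denom : Tendsto (fun r : ℝ => r + 1/10) atTop atTop :=
  tendsto_atTop_add_const_right _ _ tendsto_id

lemma tendsto_ratio_f : Tendsto (fun r : ℝ => r / (r + 1/10)) atTop (𝓝 1) := by
  have h0 : Tendsto (fun r : ℝ => (1/10 : ℝ) / (r + 1/10)) atTop (𝓝 0) :=
    tendsto_const_nhds.div_atTop tendsto_denom
  have h : Tendsto (fun r : ℝ => 1 - (1/10 : ℝ) / (r + 1/10)) atTop (𝓝 (1 - 0)) :=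
    tendsto_const_nhds.sub h0
  rw [sub_zero] at h
  apply h.congr'
  filter_upwards [eventually_gt_atTop 0] with r hr
  have : r + 1/10 ≠ 0 := by positivity
  field_simp
  ring

lemma tendsto_small_b (u : ℝ → ℝ) (hu : ∀ r : ℝ, 2/3 < r → u r ∈ Set.Ioo (6/5 : ℝ) (4/3)) :
    Tendsto (fun r : ℝ => (u r - 21/10) / (r + 1/10)) atTop (𝓝 0) := by
  refine squeeze_zero_norm' (a := fun r : ℝ => 1 / (r + 1/10)) ?_ ?_
  · filter_upwards [eventually_gt_atTop (2/3)] with r hr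
    obtain ⟨h1, h2⟩ := hu r hr
    have hd : (0:ℝ) < r + 1/10 := by linarith
    rw [Real.norm_eq_abs, abs_div, abs_of_pos hd]
    gcongr
    rw [abs_le]
    constructor <;> linarith
  · exact tendsto_const_nhds.div_atTop tendsto_denom

lemma tendsto_ratio_b (u : ℝ → ℝ) (hu : ∀ r : ℝ, 2/3 < r → u r ∈ Set.Ioo (6/5 : ℝ) (4/3)) :
    Tendsto (fun r : ℝ => (r + u r - 2) / (r + 1/10)) atTop (𝓝 1) := by
  have h := tendsto_const_nhds.add (tendsto_small_b u hu) (f := fun _ : ℝ => (1:ℝ))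
  rw [add_zero] at h
  apply h.congr'
  filter_upwards [eventually_gt_atTop 0] with r hr
  have : r + 1/10 ≠ 0 := by positivity
  field_simp
  ring

lemma tendsto_sqrt_f : Tendsto (fun r : ℝ => Real.sqrt (r / (r + 1/10))) atTop (𝓝 1) := by
  have h := (Real.continuous_sqrt.continuousAt (x := (1:ℝ))).tendsto.comp tendsto_ratio_f
  simpa [Function.comp_def] using h

lemma tendsto_sqrt_b (u : ℝ → ℝ) (hu : ∀ r : ℝ, 2/3 < r → u r ∈ Set.Ioo (6/5 : ℝ) (4/3)) :
    Tendsto (fun r : ℝ => Real.sqrt ((r + u r - 2) / (r + 1/10))) atTop (𝓝 1) := by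
  have h := (Real.continuous_sqrt.continuousAt (x := (1:ℝ))).tendsto.comp (tendsto_ratio_b u hu)
  simpa [Function.comp_def] using h

lemma tendsto_qfp : Tendsto qfp atTop (𝓝 2) := by
  have h := tendsto_const_nhds.add tendsto_sqrt_f (f := fun _ : ℝ => (1:ℝ))
  norm_num at h
  exact h

lemma tendsto_qfm : Tendsto qfm atTop (𝓝 0) := by
  have h := tendsto_const_nhds.sub tendsto_sqrt_f (f := fun _ : ℝ => (1:ℝ))
  norm_num at h
  exact h

lemma tendsto_qbp (u : ℝ → ℝ) (hu : ∀ r : ℝ, 2/3 < r → u r ∈ Set.Ioo (6/5 : ℝ) (4/3)) :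
    Tendsto (fun r => qbp r (u r)) atTop (𝓝 2) := by
  have h := tendsto_const_nhds.add (tendsto_sqrt_b u hu) (f := fun _ : ℝ => (1:ℝ))
  norm_num at h
  exact h

lemma tendsto_qbm (u : ℝ → ℝ) (hu : ∀ r : ℝ, 2/3 < r → u r ∈ Set.Ioo (6/5 : ℝ) (4/3)) :
    Tendsto (fun r => qbm r (u r)) atTop (𝓝 0) := by
  have h := tendsto_const_nhds.sub (tendsto_sqrt_b u hu) (f := fun _ : ℝ => (1:ℝ))
  norm_num at h
  exact h

lemma tendsto_af : Tendsto af atTop (𝓝 (Real.sqrt 2/2)) := by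
  have h := ((tendsto_const_nhds (x := (1/2:ℝ))).sub
    (tendsto_qfm.div tendsto_qfp (by norm_num))).const_mul (Real.sqrt 2)
  have hv : Real.sqrt 2 * (1/2 - 0/2) = Real.sqrt 2/2 := by ring
  rw [hv] at h
  exact h

lemma tendsto_ab (u : ℝ → ℝ) (hu : ∀ r : ℝ, 2/3 < r → u r ∈ Set.Ioo (6/5 : ℝ) (4/3)) :
    Tendsto (fun r => ab r (u r)) atTop (𝓝 (Real.sqrt 2/2)) := by
  have h := ((tendsto_const_nhds (x := (1/2:ℝ))).sub
    ((tendsto_qbm u hu).div (tendsto_qbp u hu) (by norm_num))).const_mul (Real.sqrt 2)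
  have hv : Real.sqrt 2 * (1/2 - 0/2) = Real.sqrt 2/2 := by ring
  rw [hv] at h
  exact h

lemma tendsto_c1 : Tendsto (fun r : ℝ => 1 / (10 * (r + 1/10))) atTop (𝓝 0) :=
  tendsto_const_nhds.div_atTop (tendsto_denom.const_mul_atTop (by norm_num))

lemma main_Mf : Tendsto (fun r => Mf r) atTop (𝓝 (1/3)) := by
  have hJsq : Tendsto (fun r => Jsq (af r)) atTop (𝓝 (Real.sqrt 2/6)) := by
    have h := contAt_Jsq.tendsto.comp tendsto_af
    rwa [Jsq_val] at h
  have hJ1 : Tendsto (fun r => Jn (af r) 1) atTop (𝓝 (1/2)) := by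
    have h := (contAt_Jn 1 le_rfl).tendsto.comp tendsto_af
    rwa [Jn1_val] at h
  have hJ2 : Tendsto (fun r => Jn (af r) 2) atTop (𝓝 (1/6)) := by
    have h := (contAt_Jn 2 (by norm_num)).tendsto.comp tendsto_af
    rwa [Jn2_val] at h
  have hJ3 : Tendsto (fun r => Jn (af r) 3) atTop (𝓝 (1/12)) := by
    have h := (contAt_Jn 3 (by norm_num)).tendsto.comp tendsto_af
    rwa [Jn3_val] at h
  have T : Tendsto (fun r => Mf r) atTop
      (𝓝 ((2:ℝ)/2 * Real.sqrt 2 * (2 - 2*0) * (Real.sqrt 2/6) + 0 * (1/2)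
        - 2*2*(1/6) + 2^2*(1/12))) := by
    simp only [Mf]
    exact (((((tendsto_qfp.div_const 2).mul_const (Real.sqrt 2)).mul
      (tendsto_qfp.sub (tendsto_qfm.const_mul 2))).mul hJsq).add
      (tendsto_c1.mul hJ1)).sub ((tendsto_qfp.const_mul 2).mul hJ2) |>.add
      ((tendsto_qfp.pow 2).mul hJ3)
  have hval : (2:ℝ)/2 * Real.sqrt 2 * (2 - 2*0) * (Real.sqrt 2/6) + 0 * (1/2)
      - 2*2*(1/6) + 2^2*(1/12) = 1/3 := by
    linear_combination (1/3) * s2_mul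
  rwa [hval] at T

lemma main_Mb (u : ℝ → ℝ) (hu : ∀ r : ℝ, 2/3 < r → u r ∈ Set.Ioo (6/5 : ℝ) (4/3)) :
    Tendsto (fun r => Mb r (u r)) atTop (𝓝 (-(1/3))) := by
  have hab := tendsto_ab u hu
  have hqbp := tendsto_qbp u hu
  have hqbm := tendsto_qbm u hu
  have hJsq : Tendsto (fun r => Jsq (ab r (u r))) atTop (𝓝 (Real.sqrt 2/6)) := by
    have h := contAt_Jsq.tendsto.comp hab
    rwa [Jsq_val] at h
  have hJ1 : Tendsto (fun r => Jn (ab r (u r)) 1) atTop (𝓝 (1/2)) := by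
    have h := (contAt_Jn 1 le_rfl).tendsto.comp hab
    rwa [Jn1_val] at h
  have hJ2 : Tendsto (fun r => Jn (ab r (u r)) 2) atTop (𝓝 (1/6)) := by
    have h := (contAt_Jn 2 (by norm_num)).tendsto.comp hab
    rwa [Jn2_val] at h
  have hJ3 : Tendsto (fun r => Jn (ab r (u r)) 3) atTop (𝓝 (1/12)) := by
    have h := (contAt_Jn 3 (by norm_num)).tendsto.comp hab
    rwa [Jn3_val] at h
  have T : Tendsto (fun r => Mb r (u r)) atTop
      (𝓝 (-((2:ℝ)/2) * Real.sqrt 2 * (2 - 2*0) * (Real.sqrt 2/6) + 0 * (1/2)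
        + 2*2*(1/6) - 2^2*(1/12))) := by
    simp only [Mb]
    exact ((((((hqbp.div_const 2).neg).mul_const (Real.sqrt 2)).mul
      (hqbp.sub (hqbm.const_mul 2))).mul hJsq).add
      ((tendsto_small_b u hu).mul hJ1)).add ((hqbp.const_mul 2).mul hJ2) |>.sub
      ((hqbp.pow 2).mul hJ3)
  have hval : -((2:ℝ)/2) * Real.sqrt 2 * (2 - 2*0) * (Real.sqrt 2/6) + 0 * (1/2)
      + 2*2*(1/6) - 2^2*(1/12) = -(1/3) := by
    linear_combination (-1/3) * s2_mul
  rwa [hval] at T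


theorem stmt15 (ub : ℝ → ℝ)
    (hub : ∀ r : ℝ, 2/3 < r → ub r ∈ Set.Ioo (6/5 : ℝ) (4/3) ∧ Kc (ub r) r = 0) :
    Tendsto (fun r => Mf r) atTop (nhds (1/3)) ∧
    Tendsto (fun r => Mb r (ub r)) atTop (nhds (-1/3)) := by
  refine ⟨main_Mf, ?_⟩
  have hu : ∀ r : ℝ, 2/3 < r → ub r ∈ Set.Ioo (6/5:ℝ) (4/3) := fun r hr => (hub r hr).1
  have h := main_Mb ub hu
  rw [show (-1/3 : ℝ) = -(1/3) by norm_num]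
  exact h
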